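/- Let p be prime, ℓ₁ > ℓ₂ ≥ 1, and let G = Aut(ℤ/p^{ℓ₁}ℤ ⊕ ℤ/p^{ℓ₂}ℤ), realized as matrices (a, b; c, d) with a ∈ (ℤ/p^{ℓ₁}ℤ)^×, b ∈ p^{ℓ₁−ℓ₂}(ℤ/p^{ℓ₁}ℤ), c ∈ ℤ/p^{ℓ₂}ℤ, d ∈ (ℤ/p^{ℓ₂}ℤ)^×. Then the map det : G → (ℤ/p^{ℓ₂}ℤ)^×, (a,b;c,d) ↦ (ad − bc) mod p^{ℓ₂} (where b = p^{ℓ₁−ℓ₂}b' and bc is computed as p^{ℓ₁−ℓ₂}b'c reduced mod p^{ℓ₂}), is a surjective group homomorphism. -/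

import Mathlib

section aux

variable {n m : ℕ} [NeZero n] [NeZero m]

lemma aux_apply (φ : AddMonoid.End (ZMod n × ZMod m)) (z : ZMod n × ZMod m) :
    φ z = z.1.val • φ (1, 0) + z.2.val • φ (0, 1) := by
  have h : z = z.1.val • ((1 : ZMod n), (0 : ZMod m)) + z.2.val • ((0 : ZMod n), (1 : ZMod m)) := by
    simp [Prod.ext_iff, nsmul_eq_mul, ZMod.natCast_val, ZMod.cast_id]
  conv_lhs => rw [h]
  rw [map_add, map_nsmul, map_nsmul]

end aux

theorem stmt_9 (p ℓ₁ ℓ₂ : ℕ) (hp : p.Prime) (h21 : ℓ₂ < ℓ₁) (h2 : 1 ≤ ℓ₂) :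
    ∃ D : Multiplicative (AddAut (ZMod (p ^ ℓ₁) × ZMod (p ^ ℓ₂))) →* (ZMod (p ^ ℓ₂))ˣ,
      Function.Surjective D ∧
      ∀ φ : AddAut (ZMod (p ^ ℓ₁) × ZMod (p ^ ℓ₂)),
        (D (Multiplicative.ofAdd φ) : ZMod (p ^ ℓ₂)) =
          ZMod.castHom (pow_dvd_pow p h21.le) (ZMod (p ^ ℓ₂)) (φ (1, 0)).1 * (φ (0, 1)).2 -
          ZMod.castHom (pow_dvd_pow p h21.le) (ZMod (p ^ ℓ₂)) (φ (0, 1)).1 * (φ (1, 0)).2 := by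
  haveI : NeZero (p ^ ℓ₁) := ⟨pow_ne_zero _ hp.ne_zero⟩
  haveI : NeZero (p ^ ℓ₂) := ⟨pow_ne_zero _ hp.ne_zero⟩
  set c : ZMod (p ^ ℓ₁) →+* ZMod (p ^ ℓ₂) := ZMod.castHom (pow_dvd_pow p h21.le) _ with hc
  have hcast : ∀ x : ZMod (p ^ ℓ₁), ((x.val : ZMod (p ^ ℓ₂))) = c x := by
    intro x; simp [hc, ZMod.natCast_val, ZMod.castHom_apply]
  have hcast2 : ∀ x : ZMod (p ^ ℓ₂), ((x.val : ZMod (p ^ ℓ₂))) = x := by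
    intro x; simp [ZMod.natCast_val, ZMod.cast_id]
  have det_mul : ∀ φ ψ : AddMonoid.End (ZMod (p ^ ℓ₁) × ZMod (p ^ ℓ₂)),
      c ((φ * ψ) (1, 0)).1 * ((φ * ψ) (0, 1)).2 - c ((φ * ψ) (0, 1)).1 * ((φ * ψ) (1, 0)).2 =
      (c (φ (1, 0)).1 * (φ (0, 1)).2 - c (φ (0, 1)).1 * (φ (1, 0)).2) *
      (c (ψ (1, 0)).1 * (ψ (0, 1)).2 - c (ψ (0, 1)).1 * (ψ (1, 0)).2) := by
    intro φ ψ
    have h1 : (φ * ψ) ((1 : ZMod (p ^ ℓ₁)), (0 : ZMod (p ^ ℓ₂))) =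
        ((ψ (1, 0)).1).val • φ (1, 0) + ((ψ (1, 0)).2).val • φ (0, 1) := by
      show φ (ψ (1, 0)) = _
      exact aux_apply φ (ψ (1, 0))
    have h2 : (φ * ψ) ((0 : ZMod (p ^ ℓ₁)), (1 : ZMod (p ^ ℓ₂))) =
        ((ψ (0, 1)).1).val • φ (1, 0) + ((ψ (0, 1)).2).val • φ (0, 1) := by
      show φ (ψ (0, 1)) = _
      exact aux_apply φ (ψ (0, 1))
    rw [h1, h2]
    simp only [Prod.fst_add, Prod.snd_add, Prod.smul_fst, Prod.smul_snd]
    simp only [nsmul_eq_mul, map_add, map_mul, map_natCast, hcast, hcast2]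
    ring
  let f : AddMonoid.End (ZMod (p ^ ℓ₁) × ZMod (p ^ ℓ₂)) →* ZMod (p ^ ℓ₂) :=
  { toFun := fun φ => c (φ (1, 0)).1 * (φ (0, 1)).2 - c (φ (0, 1)).1 * (φ (1, 0)).2
    map_one' := by simp [AddMonoid.End.one_apply]
    map_mul' := det_mul }
  let t : Multiplicative (AddAut (ZMod (p ^ ℓ₁) × ZMod (p ^ ℓ₂))) →* AddMonoid.End (ZMod (p ^ ℓ₁) × ZMod (p ^ ℓ₂)) :=
  { toFun := fun φ => (Multiplicative.toAdd φ).toAddMonoidHom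
    map_one' := rfl
    map_mul' := fun _ _ => rfl }
  refine ⟨(f.comp t).toHomUnits, ?_, fun φ => rfl⟩
  intro u
  set Phi : AddAut (ZMod (p ^ ℓ₁) × ZMod (p ^ ℓ₂)) :=
    AddEquiv.prodCongr (AddEquiv.refl _)
      (DistribMulAction.toAddAut (ZMod (p ^ ℓ₂))ˣ (ZMod (p ^ ℓ₂)) u) with hPhi
  refine ⟨Multiplicative.ofAdd Phi, ?_⟩
  apply Units.ext
  show c ((t (Multiplicative.ofAdd Phi)) (1, 0)).1 * ((t (Multiplicative.ofAdd Phi)) (0, 1)).2 - c ((t (Multiplicative.ofAdd Phi)) (0, 1)).1 * ((t (Multiplicative.ofAdd Phi)) (1, 0)).2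
      = (u : ZMod (p ^ ℓ₂))
  rw [show (t (Multiplicative.ofAdd Phi)) ((1 : ZMod (p ^ ℓ₁)), (0 : ZMod (p ^ ℓ₂)))
        = ((1 : ZMod (p ^ ℓ₁)), u • (0 : ZMod (p ^ ℓ₂))) from rfl,
      show (t (Multiplicative.ofAdd Phi)) ((0 : ZMod (p ^ ℓ₁)), (1 : ZMod (p ^ ℓ₂)))
        = ((0 : ZMod (p ^ ℓ₁)), u • (1 : ZMod (p ^ ℓ₂))) from rfl]
  simp [Units.smul_def]
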